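/- Let A be a symmetric positive definite d×d real matrix, b ∈ ℝ^d, x the solution of Ax = b, and x_0 ∈ ℝ^d with residual r_0 = b - A x_0. The conjugate gradient search directions, defined by s_1 = r_0 and s_m = r_{m-1} - (s_{m-1}ᵀ A r_{m-1})/(s_{m-1}ᵀ A s_{m-1}) · s_{m-1} (with r_m the residual of the m-th CG iterate), are pairwise A-orthogonal: s_iᵀ A s_j = 0 for i ≠ j. -/

import Mathlib

open Matrix
open scoped Matrix

/-- CG search directions are pairwise A-orthogonal. -/
theorem cg_directions_A_orthogonal
    (d : ℕ) (A : Matrix (Fin d) (Fin d) ℝ) (hA : A.PosDef)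
    (b x₀ : Fin d → ℝ) (x : Fin d → ℝ) (hx : A.mulVec x = b)
    (xit r s : ℕ → Fin d → ℝ) (α : ℕ → ℝ) (m : ℕ)
    (hx0 : xit 0 = x₀)
    (hr : ∀ k, r k = b - A.mulVec (xit k))
    (hs1 : s 1 = r 0)
    (hα : ∀ k, 1 ≤ k → α k = (r (k - 1) ⬝ᵥ r (k - 1)) / (s k ⬝ᵥ A.mulVec (s k)))
    (hxit : ∀ k, 1 ≤ k → xit k = xit (k - 1) + α k • s k)
    (hs : ∀ k, 2 ≤ k → s k = r (k - 1) -
      ((s (k - 1) ⬝ᵥ A.mulVec (r (k - 1))) / (s (k - 1) ⬝ᵥ A.mulVec (s (k - 1)))) • s (k - 1))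
    (hnz : ∀ k, 1 ≤ k → k ≤ m → s k ≠ 0) :
    ∀ i j, 1 ≤ i → i ≤ m → 1 ≤ j → j ≤ m → i ≠ j →
      s i ⬝ᵥ A.mulVec (s j) = 0 := by
  -- symmetry of the A-inner product
  have hsymm : ∀ u v : Fin d → ℝ, u ⬝ᵥ A.mulVec v = v ⬝ᵥ A.mulVec u := by
    have hT : Aᵀ = A := by
      rw [← conjTranspose_eq_transpose_of_trivial]; exact hA.1
    intro u v
    rw [dotProduct_mulVec, ← mulVec_transpose, hT, dotProduct_comm]
  -- positivity of the quadratic form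
  have hpos : ∀ k, 1 ≤ k → k ≤ m → 0 < s k ⬝ᵥ A.mulVec (s k) := by
    intro k h1 h2
    have := hA.dotProduct_mulVec_pos (hnz k h1 h2)
    simpa using this
  have hposne : ∀ k, 1 ≤ k → k ≤ m → s k ⬝ᵥ A.mulVec (s k) ≠ 0 := by
    intro k h1 h2; exact ne_of_gt (hpos k h1 h2)
  -- residual recurrence
  have hrr : ∀ k, 1 ≤ k → r k = r (k - 1) - α k • A.mulVec (s k) := by
    intro k hk
    rw [hr k, hr (k - 1), hxit k hk, mulVec_add, mulVec_smul]
    abel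
  -- α j ≠ 0 as long as j + 1 ≤ m
  have hαnz : ∀ j, 1 ≤ j → j + 1 ≤ m → α j ≠ 0 := by
    intro j h1 h2 hzero
    have hd : s j ⬝ᵥ A.mulVec (s j) ≠ 0 := hposne j h1 (by omega)
    have hnum : r (j - 1) ⬝ᵥ r (j - 1) = 0 := by
      have := hα j h1
      rw [hzero] at this
      rcases div_eq_zero_iff.mp this.symm with h | h
      · exact h
      · exact absurd h hd
    have hr0 : r (j - 1) = 0 := dotProduct_self_eq_zero.mp hnum
    have hrj : r j = 0 := by
      rw [hrr j h1, hr0, hzero, zero_smul, sub_zero]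
    have hsj1 : s (j + 1) = 0 := by
      have := hs (j + 1) (by omega)
      simp only [Nat.add_sub_cancel] at this
      rw [this, hrj, mulVec_zero, dotProduct_zero, zero_div, zero_smul, sub_zero]
    exact hnz (j + 1) (by omega) h2 hsj1
  -- main simultaneous induction
  have main : ∀ k, 1 ≤ k → k ≤ m →
      (∀ i j, 1 ≤ i → i ≤ k → 1 ≤ j → j ≤ k → i ≠ j → s i ⬝ᵥ A.mulVec (s j) = 0) ∧
      (∀ i, 1 ≤ i → i ≤ k → r k ⬝ᵥ s i = 0) ∧
      (∀ i, i < k → r k ⬝ᵥ r i = 0) := by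
    intro k hk
    induction k, hk using Nat.le_induction with
    | base =>
      intro hm
      have hbase : r 1 ⬝ᵥ s 1 = 0 := by
        have h1 : r 1 = r 0 - α 1 • A.mulVec (s 1) := by simpa using hrr 1 le_rfl
        have hα1 : α 1 = (r 0 ⬝ᵥ r 0) / (s 1 ⬝ᵥ A.mulVec (s 1)) := by simpa using hα 1 le_rfl
        rw [h1, sub_dotProduct, smul_dotProduct, smul_eq_mul, hα1,
          dotProduct_comm (A.mulVec (s 1)) (s 1),
          div_mul_cancel₀ _ (hposne 1 le_rfl hm), hs1, dotProduct_comm, sub_self]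
      refine ⟨?_, ?_, ?_⟩
      · intro i j h1 h2 h3 h4 hne; omega
      · intro i h1 h2
        have : i = 1 := by omega
        subst this; exact hbase
      · intro i hi
        have : i = 0 := by omega
        subst this
        rw [← hs1]; exact hbase
    | succ n hn IH =>
      intro hm
      obtain ⟨IHa, IHb, IHc⟩ := IH (by omega)
      set β := (s n ⬝ᵥ A.mulVec (r n)) / (s n ⬝ᵥ A.mulVec (s n)) with hβ
      have hsn1 : s (n + 1) = r n - β • s n := by
        have := hs (n + 1) (by omega)
        simpa using this
      -- A-orthogonality of the new direction against the old ones
      have key : ∀ j, 1 ≤ j → j ≤ n → s (n + 1) ⬝ᵥ A.mulVec (s j) = 0 := by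
        intro j h1 h2
        rw [hsn1, sub_dotProduct, smul_dotProduct, smul_eq_mul]
        rcases eq_or_lt_of_le h2 with hj | hj
        · -- j = n : by construction of β
          subst hj
          rw [hβ, div_mul_cancel₀ _ (hposne j hn (by omega)), hsymm (r j) (s j), sub_self]
        · -- j < n : use residual orthogonality
          have hA0 : s n ⬝ᵥ A.mulVec (s j) = 0 := IHa n j hn le_rfl h1 h2 (by omega)
          have hrAs : r n ⬝ᵥ A.mulVec (s j) = 0 := by
            have hαj : α j ≠ 0 := hαnz j h1 (by omega)
            have hrec : α j • A.mulVec (s j) = r (j - 1) - r j := by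
              rw [hrr j h1]; abel
            have hdot : α j * (r n ⬝ᵥ A.mulVec (s j)) = 0 := by
              have : r n ⬝ᵥ (α j • A.mulVec (s j)) = r n ⬝ᵥ (r (j - 1) - r j) := by
                rw [hrec]
              rw [dotProduct_smul, smul_eq_mul, dotProduct_sub,
                IHc (j - 1) (by omega), IHc j (by omega), sub_self] at this
              exact this
            exact (mul_eq_zero.mp hdot).resolve_left hαj
          rw [hrAs, hA0, mul_zero, sub_self]
      -- full A-orthogonality up to n+1
      have newa : ∀ i j, 1 ≤ i → i ≤ n + 1 → 1 ≤ j → j ≤ n + 1 → i ≠ j →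
          s i ⬝ᵥ A.mulVec (s j) = 0 := by
        intro i j h1 h2 h3 h4 hne
        rcases eq_or_lt_of_le h2 with hi | hi
        · subst hi
          exact key j h3 (by omega)
        · rcases eq_or_lt_of_le h4 with hj | hj
          · subst hj
            rw [hsymm]; exact key i h1 (by omega)
          · exact IHa i j h1 (by omega) h3 (by omega) hne
      -- residual orthogonal to all directions
      have hrn1 : r (n + 1) = r n - α (n + 1) • A.mulVec (s (n + 1)) := by
        simpa using hrr (n + 1) (by omega)
      have newb : ∀ i, 1 ≤ i → i ≤ n + 1 → r (n + 1) ⬝ᵥ s i = 0 := by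
        intro i h1 h2
        rw [hrn1, sub_dotProduct, smul_dotProduct, smul_eq_mul,
          dotProduct_comm (A.mulVec (s (n + 1))) (s i), hsymm (s i) (s (n + 1))]
        rcases eq_or_lt_of_le h2 with hi | hi
        · subst hi
          have hrs : r n ⬝ᵥ s (n + 1) = r n ⬝ᵥ r n := by
            rw [hsn1, dotProduct_sub, dotProduct_smul, smul_eq_mul,
              IHb n hn le_rfl, mul_zero, sub_zero]
          have hαi : α (n + 1) = (r n ⬝ᵥ r n) / (s (n + 1) ⬝ᵥ A.mulVec (s (n + 1))) := by
            have := hα (n + 1) (by omega)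
            simpa using this
          rw [hrs, hαi, div_mul_cancel₀ _ (hposne (n + 1) (by omega) hm), sub_self]
        · rw [IHb i h1 (by omega), key i h1 (by omega), mul_zero, sub_self]
      -- residual orthogonal to earlier residuals
      have newc : ∀ i, i < n + 1 → r (n + 1) ⬝ᵥ r i = 0 := by
        intro i hi
        rcases Nat.eq_zero_or_pos i with h0 | h0
        · subst h0
          rw [← hs1]; exact newb 1 le_rfl (by omega)
        · have hsi1 : s (i + 1) = r i -
              ((s i ⬝ᵥ A.mulVec (r i)) / (s i ⬝ᵥ A.mulVec (s i))) • s i := by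
            have := hs (i + 1) (by omega)
            simpa using this
          have hri : r i = s (i + 1) +
              ((s i ⬝ᵥ A.mulVec (r i)) / (s i ⬝ᵥ A.mulVec (s i))) • s i := by
            rw [hsi1]; abel
          rw [hri, dotProduct_add, dotProduct_smul, smul_eq_mul,
            newb (i + 1) (by omega) (by omega), newb i h0 (by omega), mul_zero, add_zero]
      exact ⟨newa, newb, newc⟩
  intro i j h1 h2 h3 h4 hne
  exact (main (max i j) (by omega) (by omega)).1 i j h1 (le_max_left i j) h3 (le_max_right i j) hne
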